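/- Let L̂_u be a connected undirected Laplacian (symmetric PSD, L̂_u𝟙 = 0, rank n−1) partitioned by a vertex subset V₁ and its complement V₂, with the block L̂_u[V₂,V₂] invertible. Then the Schur complement L̂_u^{k-r} = L̂_u[V₁,V₁] − L̂_u[V₁,V₂] L̂_u[V₂,V₂]^{-1} L̂_u[V₂,V₁] is symmetric positive semidefinite with L̂_u^{k-r}𝟙 = 0, and for all i, j ∈ V₁, the resistance distance (e_i − e_j)ᵀ(L̂_u^{k-r})⁺(e_i − e_j) equals (e_i − e_j)ᵀ L̂_u⁺ (e_i − e_j). -/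

import Mathlib

open Matrix

section Helpers

variable {n : ℕ}

lemma sum_split_aux (s : Finset (Fin n)) (f : Fin n → ℝ) :
    ∑ b, f b = (∑ b : {i : Fin n // i ∈ s}, f b.1) + ∑ b : {i : Fin n // i ∉ s}, f b.1 := by
  rw [← Finset.sum_add_sum_compl s f]
  congr 1
  · exact Finset.sum_subtype s (fun x => Iff.rfl) f
  · exact Finset.sum_subtype sᶜ (fun x => Finset.mem_compl) f

lemma dot_split (s : Finset (Fin n)) (v w : Fin n → ℝ) :
    v ⬝ᵥ w = ((fun k : {i : Fin n // i ∈ s} => v k.1) ⬝ᵥ fun k => w k.1) +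
      ((fun k : {i : Fin n // i ∉ s} => v k.1) ⬝ᵥ fun k => w k.1) := by
  simp only [dotProduct]
  exact sum_split_aux s fun b => v b * w b

lemma mulVec_block_in (s : Finset (Fin n)) (M : Matrix (Fin n) (Fin n) ℝ) (w : Fin n → ℝ)
    (a : {i : Fin n // i ∈ s}) :
    (M *ᵥ w) a.1 = (M.toBlock (fun i => i ∈ s) (fun i => i ∈ s) *ᵥ fun k => w k.1) a +
      (M.toBlock (fun i => i ∈ s) (fun i => i ∉ s) *ᵥ fun k => w k.1) a := by
  simp only [mulVec, dotProduct, toBlock_apply]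
  exact sum_split_aux s fun b => M a.1 b * w b

lemma mulVec_block_out (s : Finset (Fin n)) (M : Matrix (Fin n) (Fin n) ℝ) (w : Fin n → ℝ)
    (a : {i : Fin n // i ∉ s}) :
    (M *ᵥ w) a.1 = (M.toBlock (fun i => i ∉ s) (fun i => i ∈ s) *ᵥ fun k => w k.1) a +
      (M.toBlock (fun i => i ∉ s) (fun i => i ∉ s) *ᵥ fun k => w k.1) a := by
  simp only [mulVec, dotProduct, toBlock_apply]
  exact sum_split_aux s fun b => M a.1 b * w b

lemma ker_const (hn : 0 < n) (Lu : Matrix (Fin n) (Fin n) ℝ)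
    (hrow : Lu *ᵥ (1 : Fin n → ℝ) = 0) (hrank : Lu.rank = n - 1)
    (v : Fin n → ℝ) (hv : Lu *ᵥ v = 0) : ∃ c : ℝ, v = c • (1 : Fin n → ℝ) := by
  have hone : (1 : Fin n → ℝ) ≠ 0 := fun h => one_ne_zero (congrFun h ⟨0, hn⟩)
  have hle : Submodule.span ℝ {(1 : Fin n → ℝ)} ≤ LinearMap.ker Lu.mulVecLin := by
    rw [Submodule.span_le, Set.singleton_subset_iff]
    simp [LinearMap.mem_ker, Matrix.mulVecLin_apply, hrow]
  have h2 : Lu.rank + Module.finrank ℝ (LinearMap.ker Lu.mulVecLin) = n := by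
    rw [Matrix.rank, LinearMap.finrank_range_add_finrank_ker Lu.mulVecLin,
      Module.finrank_fin_fun]
  have hker1 : Module.finrank ℝ (LinearMap.ker Lu.mulVecLin) = 1 := by omega
  have hsp : Module.finrank ℝ (Submodule.span ℝ {(1 : Fin n → ℝ)}) = 1 :=
    finrank_span_singleton hone
  have heq : Submodule.span ℝ {(1 : Fin n → ℝ)} = LinearMap.ker Lu.mulVecLin :=
    Submodule.eq_of_le_of_finrank_le hle (by rw [hker1, hsp])
  have hvm : v ∈ Submodule.span ℝ {(1 : Fin n → ℝ)} := by
    rw [heq, LinearMap.mem_ker, Matrix.mulVecLin_apply, hv]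
  obtain ⟨c, hc⟩ := Submodule.mem_span_singleton.mp hvm
  exact ⟨c, hc.symm⟩

end Helpers

/-- The four Moore–Penrose conditions characterizing the pseudoinverse. -/
def IsMoorePenrose {m : Type*} [Fintype m] [DecidableEq m]
    (A B : Matrix m m ℝ) : Prop :=
  A * B * A = A ∧ B * A * B = B ∧ (A * B)ᵀ = A * B ∧ (B * A)ᵀ = B * A

/-- Kron reduction. The Schur complement of a connected undirected
Laplacian `Lu` with respect to an invertible block `Lu[V₂,V₂]` is a symmetric PSD
matrix with zero row sums, and the resistance distance between any two retained nodes
computed from the reduced Laplacian equals that computed from `Lu`. -/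
theorem kron_reduction_preserves_resistance {n : ℕ} (hn : 0 < n)
    (Lu : Matrix (Fin n) (Fin n) ℝ) (hsym : Luᵀ = Lu) (hpsd : Lu.PosSemidef)
    (hrow : Lu *ᵥ (1 : Fin n → ℝ) = 0) (hrank : Lu.rank = n - 1)
    (s : Finset (Fin n))
    (hinv : IsUnit (Lu.toBlock (fun i => i ∉ s) (fun i => i ∉ s)))
    (Lkr : Matrix {i : Fin n // i ∈ s} {i : Fin n // i ∈ s} ℝ)
    (hLkr : Lkr = Lu.toBlock (fun i => i ∈ s) (fun i => i ∈ s) -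
      Lu.toBlock (fun i => i ∈ s) (fun i => i ∉ s) *
        (Lu.toBlock (fun i => i ∉ s) (fun i => i ∉ s))⁻¹ *
        Lu.toBlock (fun i => i ∉ s) (fun i => i ∈ s))
    (B : Matrix (Fin n) (Fin n) ℝ) (hB : IsMoorePenrose Lu B)
    (C : Matrix {i : Fin n // i ∈ s} {i : Fin n // i ∈ s} ℝ)
    (hC : IsMoorePenrose Lkr C) :
    Lkr.PosSemidef ∧ Lkr *ᵥ (1 : {i : Fin n // i ∈ s} → ℝ) = 0 ∧
    ∀ i j : {i : Fin n // i ∈ s},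
      (Pi.single i 1 - Pi.single j 1) ⬝ᵥ (C *ᵥ (Pi.single i 1 - Pi.single j 1)) =
      (Pi.single i.1 1 - Pi.single j.1 1) ⬝ᵥ (B *ᵥ (Pi.single i.1 1 - Pi.single j.1 1)) := by
  set A := Lu.toBlock (fun i => i ∈ s) (fun i => i ∈ s) with hA
  set Bm := Lu.toBlock (fun i => i ∈ s) (fun i => i ∉ s) with hBm
  set Cm := Lu.toBlock (fun i => i ∉ s) (fun i => i ∈ s) with hCm
  set D := Lu.toBlock (fun i => i ∉ s) (fun i => i ∉ s) with hD
  have hdet : IsUnit D.det := (Matrix.isUnit_iff_isUnit_det D).mp hinv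
  -- symmetry facts
  have hsymf : ∀ a b : Fin n, Lu b a = Lu a b := fun a b => congrFun (congrFun hsym a) b
  have hAt : Aᵀ = A := by ext i j; exact hsymf i.1 j.1
  have hDt : Dᵀ = D := by ext i j; exact hsymf i.1 j.1
  have hCt : Cmᵀ = Bm := by ext i j; exact hsymf i.1 j.1
  have hBt : Bmᵀ = Cm := by ext i j; exact hsymf i.1 j.1
  have hDit : (D⁻¹)ᵀ = D⁻¹ := by rw [Matrix.transpose_nonsing_inv, hDt]
  have hsymK : Lkrᵀ = Lkr := by
    rw [hLkr, transpose_sub, hAt, Matrix.transpose_mul, Matrix.transpose_mul, hCt, hDit, hBt,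
      Matrix.mul_assoc]
  -- part 1 : PSD
  have hherm : Lkr.IsHermitian := by
    ext i j
    rw [conjTranspose_apply, star_trivial]
    exact congrFun (congrFun hsymK i) j
  have hpsdK : Lkr.PosSemidef := by
    refine Matrix.PosSemidef.of_dotProduct_mulVec_nonneg hherm fun x => ?_
    set u : {i : Fin n // i ∉ s} → ℝ := -(D⁻¹ *ᵥ (Cm *ᵥ x)) with hu
    set w : Fin n → ℝ := fun a => if h : a ∈ s then x ⟨a, h⟩ else u ⟨a, h⟩ with hw
    have hw1 : (fun k : {i : Fin n // i ∈ s} => w k.1) = x := by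
      funext k; exact dif_pos k.2
    have hw2 : (fun k : {i : Fin n // i ∉ s} => w k.1) = u := by
      funext k; exact dif_neg k.2
    have hin : (fun a : {i : Fin n // i ∈ s} => (Lu *ᵥ w) a.1) = Lkr *ᵥ x := by
      funext a
      rw [mulVec_block_in s Lu w a, hw1, hw2, hLkr]
      show (A *ᵥ x) a + (Bm *ᵥ u) a = _
      rw [hu]
      simp only [Matrix.mulVec_neg, Matrix.mulVec_mulVec, Matrix.sub_mulVec, Pi.add_apply,
        Pi.neg_apply, Pi.sub_apply, Matrix.mul_assoc]
      ring
    have hout : ∀ a : {i : Fin n // i ∉ s}, (Lu *ᵥ w) a.1 = 0 := by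
      intro a
      rw [mulVec_block_out s Lu w a, hw1, hw2, hu]
      show (Cm *ᵥ x) a + (D *ᵥ -(D⁻¹ *ᵥ (Cm *ᵥ x))) a = 0
      rw [Matrix.mulVec_neg, Matrix.mulVec_mulVec, Matrix.mul_nonsing_inv D hdet,
        Matrix.one_mulVec]
      simp
    have hsw : star w = w := by funext a; exact star_trivial _
    have key : star w ⬝ᵥ (Lu *ᵥ w) = x ⬝ᵥ (Lkr *ᵥ x) := by
      rw [hsw, dot_split s w (Lu *ᵥ w), hw1, hw2]
      have h0 : (fun k : {i : Fin n // i ∉ s} => (Lu *ᵥ w) k.1) = 0 := funext hout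
      rw [h0, hin, dotProduct_zero, add_zero]
    rw [star_trivial]
    calc (0:ℝ) ≤ star w ⬝ᵥ (Lu *ᵥ w) := hpsd.dotProduct_mulVec_nonneg w
    _ = x ⬝ᵥ (Lkr *ᵥ x) := key
  refine ⟨hpsdK, ?_, ?_⟩
  -- part 2 : row sums
  · have h1 : (fun k : {i : Fin n // i ∈ s} => (1 : Fin n → ℝ) k.1) =
        (1 : {i : Fin n // i ∈ s} → ℝ) := rfl
    have h2 : (fun k : {i : Fin n // i ∉ s} => (1 : Fin n → ℝ) k.1) =
        (1 : {i : Fin n // i ∉ s} → ℝ) := rfl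
    have hinrow : ∀ a : {i : Fin n // i ∈ s},
        (A *ᵥ 1) a + (Bm *ᵥ (1 : {i : Fin n // i ∉ s} → ℝ)) a = 0 := by
      intro a
      have h := mulVec_block_in s Lu (1 : Fin n → ℝ) a
      rw [h1, h2, hrow] at h
      exact h.symm
    have houtrow : Cm *ᵥ (1 : {i : Fin n // i ∈ s} → ℝ) +
        D *ᵥ (1 : {i : Fin n // i ∉ s} → ℝ) = 0 := by
      funext a
      have h := mulVec_block_out s Lu (1 : Fin n → ℝ) a
      rw [h1, h2, hrow] at h
      exact h.symm
    have hCm1 : Cm *ᵥ (1 : {i : Fin n // i ∈ s} → ℝ) =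
        -(D *ᵥ (1 : {i : Fin n // i ∉ s} → ℝ)) :=
      eq_neg_of_add_eq_zero_left houtrow
    have hkey : (Bm * D⁻¹ * Cm) *ᵥ (1 : {i : Fin n // i ∈ s} → ℝ) =
        -(Bm *ᵥ (1 : {i : Fin n // i ∉ s} → ℝ)) := by
      rw [← Matrix.mulVec_mulVec, hCm1, Matrix.mulVec_neg, Matrix.mulVec_mulVec,
        Matrix.mul_assoc, Matrix.nonsing_inv_mul D hdet, Matrix.mul_one]
    funext a
    rw [hLkr, Matrix.sub_mulVec, hkey]
    simpa using hinrow a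
  -- part 3 : resistance
  · intro i j
    set x0 : Fin n → ℝ := Pi.single i.1 1 - Pi.single j.1 1 with hx0
    set x : {i : Fin n // i ∈ s} → ℝ := Pi.single i 1 - Pi.single j 1 with hx
    set y : Fin n → ℝ := B *ᵥ x0 with hy
    set P : Matrix (Fin n) (Fin n) ℝ := Lu * B with hP
    have hPt : Pᵀ = P := hB.2.2.1
    have hPP : P * P = P := by
      rw [hP, ← Matrix.mul_assoc, hB.1]
    have hPone : P *ᵥ (1 : Fin n → ℝ) = 0 := by
      rw [← hPt, hP, Matrix.transpose_mul, ← Matrix.mulVec_mulVec, hsym, hrow,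
        Matrix.mulVec_zero]
    -- Lu *ᵥ y = x0
    have hLuy : Lu *ᵥ y = x0 := by
      set r : Fin n → ℝ := x0 - P *ᵥ x0 with hr
      have hPr : P *ᵥ r = 0 := by
        rw [hr, Matrix.mulVec_sub, Matrix.mulVec_mulVec, hPP, sub_self]
      have hLur : Lu *ᵥ r = 0 := by
        have h1 : r ᵥ* P = 0 := by
          rw [← Matrix.mulVec_transpose, hPt, hPr]
        have h2 : r ᵥ* Lu = 0 := by
          have h3 : r ᵥ* (Lu * B * Lu) = 0 := by
            rw [← Matrix.vecMul_vecMul, ← hP, h1, Matrix.zero_vecMul]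
          rwa [hB.1] at h3
        rw [← hsym, Matrix.mulVec_transpose, h2]
      obtain ⟨c, hc⟩ := ker_const hn Lu hrow hrank r hLur
      have hdot : (1 : Fin n → ℝ) ⬝ᵥ r = c * n := by
        rw [hc]
        simp [dotProduct, Finset.sum_const, mul_comm]
      have hdot0 : (1 : Fin n → ℝ) ⬝ᵥ r = 0 := by
        rw [hr, dotProduct_sub]
        have ha : (1 : Fin n → ℝ) ⬝ᵥ (P *ᵥ x0) = 0 := by
          rw [Matrix.dotProduct_mulVec, ← Matrix.mulVec_transpose, hPt, hPone,
            zero_dotProduct]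
        rw [ha, hx0, dotProduct_sub, dotProduct_single, dotProduct_single]
        simp
      have hc0 : c = 0 := by
        have hnne : (n : ℝ) ≠ 0 := Nat.cast_ne_zero.mpr hn.ne'
        have h4 := hdot.symm.trans hdot0
        exact (mul_eq_zero.mp h4).resolve_right hnne
      have hr0 : r = 0 := by rw [hc, hc0, zero_smul]
      have h5 : P *ᵥ x0 = x0 := (sub_eq_zero.mp (hr ▸ hr0)).symm
      rw [hy, Matrix.mulVec_mulVec, ← hP, h5]
    -- restrictions
    set z : {i : Fin n // i ∈ s} → ℝ := fun k => y k.1 with hz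
    set y2 : {i : Fin n // i ∉ s} → ℝ := fun k => y k.1 with hy2
    have hx0in : ∀ a : {i : Fin n // i ∈ s}, x0 a.1 = x a := by
      intro a
      rw [hx0, hx]
      simp only [Pi.sub_apply, Pi.single_apply, Subtype.ext_iff]
    have hx0out : ∀ a : {i : Fin n // i ∉ s}, x0 a.1 = 0 := by
      intro a
      rw [hx0]
      simp only [Pi.sub_apply, Pi.single_apply]
      rw [if_neg (fun h => a.2 (by rw [h]; exact i.2)),
        if_neg (fun h => a.2 (by rw [h]; exact j.2))]
      simp
    have houtz : Cm *ᵥ z + D *ᵥ y2 = 0 := by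
      funext a
      have h := mulVec_block_out s Lu y a
      rw [hLuy, ← hz, ← hy2] at h
      simp only [Pi.add_apply, Pi.zero_apply]
      rw [← h]
      exact hx0out a
    have hinz : ∀ a : {i : Fin n // i ∈ s}, (A *ᵥ z) a + (Bm *ᵥ y2) a = x a := by
      intro a
      have h := mulVec_block_in s Lu y a
      rw [hLuy, ← hz, ← hy2] at h
      rw [← h]
      exact hx0in a
    have hCmz : Cm *ᵥ z = -(D *ᵥ y2) := eq_neg_of_add_eq_zero_left houtz
    have hLkrz : Lkr *ᵥ z = x := by
      funext a
      rw [hLkr, Matrix.sub_mulVec]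
      have hkey : (Bm * D⁻¹ * Cm) *ᵥ z = -(Bm *ᵥ y2) := by
        rw [← Matrix.mulVec_mulVec, hCmz, Matrix.mulVec_neg, Matrix.mulVec_mulVec,
          Matrix.mul_assoc, Matrix.nonsing_inv_mul D hdet, Matrix.mul_one]
      rw [hkey]
      simp only [Pi.sub_apply, Pi.neg_apply, sub_neg_eq_add]
      exact hinz a
    have hLkrCx : Lkr *ᵥ (C *ᵥ x) = x := by
      rw [Matrix.mulVec_mulVec, ← hLkrz, Matrix.mulVec_mulVec, hC.1]
    set w' : {i : Fin n // i ∈ s} → ℝ := C *ᵥ x - z with hw'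
    have hker' : Lkr *ᵥ w' = 0 := by
      rw [hw', Matrix.mulVec_sub, hLkrCx, hLkrz, sub_self]
    have hxdot : x ⬝ᵥ w' = 0 := by
      have hstep : x ⬝ᵥ w' = z ⬝ᵥ (Lkr *ᵥ w') := by
        conv_lhs => rw [← hLkrz]
        rw [dotProduct_comm, Matrix.dotProduct_mulVec, ← Matrix.mulVec_transpose, hsymK,
          dotProduct_comm]
      rw [hstep, hker', dotProduct_zero]
    have h3 : x ⬝ᵥ (C *ᵥ x) = x ⬝ᵥ z := by
      rw [hw', dotProduct_sub, sub_eq_zero] at hxdot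
      exact hxdot
    have h4 : x ⬝ᵥ z = x0 ⬝ᵥ y := by
      rw [hx, hx0, sub_dotProduct, sub_dotProduct, single_dotProduct,
        single_dotProduct, single_dotProduct, single_dotProduct]
    rw [hy] at h4
    exact h3.trans h4
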